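/- Fix weight constants l > 0 and q > 0. Then the iterated limit of the expected contrastive loss exists and equals the loss of the expectations: lim_{m→∞} lim_{n→∞} E[ −log( ((l/m)∑_{j=1}^m g(ξ_j)) / ( g(v′) + (q/n)∑_{k=1}^n g(η_k) ) ) ] = −log( l·E_{u∼p⁺}[g(u)] / ( g(v′) + q·E_{u∼p⁻}[g(u)] ) ), where E_{u∼p⁺}[g(u)] = ∑_{u∈V} p⁺(u) g(u) and E_{u∼p⁻}[g(u)] = ∑_{u∈V} p⁻(u) g(u). -/

import Mathlib

open MeasureTheory ProbabilityTheory Filter Topology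

lemma abs_log_le_aux {a b x : ℝ} (ha : 0 < a) (hax : a ≤ x) (hxb : x ≤ b) :
    |Real.log x| ≤ |Real.log a| + |Real.log b| := by
  have h1 : Real.log a ≤ Real.log x := Real.log_le_log ha hax
  have h2 : Real.log x ≤ Real.log b := Real.log_le_log (ha.trans_le hax) hxb
  rw [abs_le]
  constructor
  · nlinarith [neg_abs_le (Real.log a), abs_nonneg (Real.log b)]
  · nlinarith [le_abs_self (Real.log b), abs_nonneg (Real.log a)]

lemma lln_comp {V Ω : Type*} [Fintype V] [MeasurableSpace V] [MeasurableSingletonClass V]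
    [MeasurableSpace Ω] (μ : Measure Ω) [IsProbabilityMeasure μ]
    (X : ℕ → Ω → V) (hmeas : ∀ k, Measurable (X k))
    (hpair : Pairwise fun i j => IndepFun (X i) (X j) μ)
    (p : V → ℝ) (hp0 : ∀ u, 0 ≤ p u)
    (hlaw : ∀ k u, μ {ω | X k ω = u} = ENNReal.ofReal (p u))
    (g : V → ℝ) :
    ∀ᵐ ω ∂μ, Tendsto (fun n : ℕ => (∑ k ∈ Finset.range n, g (X k ω)) / n)
      atTop (𝓝 (∑ u, p u * g u)) := by
  have hgm : Measurable g := measurable_of_countable g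
  have hmap : ∀ k, Measure.map (X k) μ = Measure.map (X 0) μ := by
    intro k
    apply MeasureTheory.Measure.ext_of_singleton
    intro u
    rw [Measure.map_apply (hmeas k) (measurableSet_singleton u),
      Measure.map_apply (hmeas 0) (measurableSet_singleton u)]
    have h1 : X k ⁻¹' {u} = {ω | X k ω = u} := rfl
    have h2 : X 0 ⁻¹' {u} = {ω | X 0 ω = u} := rfl
    rw [h1, h2, hlaw k u, hlaw 0 u]
  have hident : ∀ i, IdentDistrib (fun ω => g (X i ω)) (fun ω => g (X 0 ω)) μ μ := by
    intro i
    exact (IdentDistrib.comp ⟨(hmeas i).aemeasurable, (hmeas 0).aemeasurable, hmap i⟩ hgm)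
  have hint : Integrable (fun ω => g (X 0 ω)) μ := by
    rw [← Function.comp_def, ← integrable_map_measure hgm.aestronglyMeasurable
      (hmeas 0).aemeasurable]
    exact Integrable.of_finite
  have hmean : (∫ ω, g (X 0 ω) ∂μ) = ∑ u, p u * g u := by
    rw [← integral_map (hmeas 0).aemeasurable hgm.aestronglyMeasurable,
      integral_fintype (Integrable.of_finite)]
    refine Finset.sum_congr rfl fun u _ => ?_
    rw [measureReal_def, Measure.map_apply (hmeas 0) (measurableSet_singleton u)]
    have h2 : X 0 ⁻¹' {u} = {ω | X 0 ω = u} := rfl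
    rw [h2, hlaw 0 u, ENNReal.toReal_ofReal (hp0 u), smul_eq_mul]
  have := strong_law_ae_real (fun k ω => g (X k ω)) hint
    (fun i j hij => (hpair hij).comp hgm hgm) hident
  filter_upwards [this] with ω hω
  rw [hmean] at hω
  exact hω

/-- The iterated limit of the expected contrastive loss exists and equals the loss of the
expectations. -/
theorem stmt0
    {V : Type*} [Fintype V] [Nonempty V] [MeasurableSpace V] [MeasurableSingletonClass V]
    {d : ℕ} (f : V → EuclideanSpace ℝ (Fin d)) (hf : ∀ u, ‖f u‖ = 1)
    (τ : ℝ) (hτ : 0 < τ) (v v' : V)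
    (g : V → ℝ) (hg : ∀ u, g u = Real.exp ((inner ℝ (f v) (f u) : ℝ) / τ))
    (pPos pNeg : V → ℝ)
    (hpos0 : ∀ u, 0 ≤ pPos u) (hpos1 : ∑ u, pPos u = 1)
    (hneg0 : ∀ u, 0 ≤ pNeg u) (hneg1 : ∑ u, pNeg u = 1)
    (l q : ℝ) (hl : 0 < l) (hq : 0 < q)
    {Ω : Type*} [MeasurableSpace Ω] (μ : Measure Ω) [IsProbabilityMeasure μ]
    (ξ η : ℕ → Ω → V)
    (hmeasξ : ∀ j, Measurable (ξ j)) (hmeasη : ∀ k, Measurable (η k))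
    (hindep : iIndepFun (Sum.elim ξ η) μ)
    (hξlaw : ∀ j u, μ {ω | ξ j ω = u} = ENNReal.ofReal (pPos u))
    (hηlaw : ∀ k u, μ {ω | η k ω = u} = ENNReal.ofReal (pNeg u)) :
    ∃ A : ℕ → ℝ,
      (∀ m : ℕ,
        Tendsto (fun n : ℕ =>
            ∫ ω, -Real.log
              (((l / (m : ℝ)) * ∑ j ∈ Finset.range m, g (ξ j ω)) /
                (g v' + (q / (n : ℝ)) * ∑ k ∈ Finset.range n, g (η k ω))) ∂μ)
          atTop (nhds (A m))) ∧
      Tendsto A atTop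
        (nhds (-Real.log ((l * ∑ u, pPos u * g u) /
          (g v' + q * ∑ u, pNeg u * g u)))) := by
  -- basic bounds on g
  set c : ℝ := Real.exp (-τ⁻¹) with hcdef
  set C : ℝ := Real.exp τ⁻¹ with hCdef
  have hc : 0 < c := Real.exp_pos _
  have hC : 0 < C := Real.exp_pos _
  have hinner : ∀ u, |(inner ℝ (f v) (f u) : ℝ)| ≤ 1 := by
    intro u
    have h := abs_real_inner_le_norm (f v) (f u)
    rwa [hf v, hf u, one_mul] at h
  have hgc : ∀ u, c ≤ g u := by
    intro u
    rw [hg u]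
    apply Real.exp_le_exp.2
    have h : (-1 : ℝ) / τ ≤ (inner ℝ (f v) (f u) : ℝ) / τ :=
      (div_le_div_iff_of_pos_right hτ).2 (abs_le.1 (hinner u)).1
    calc -τ⁻¹ = (-1 : ℝ) / τ := by rw [neg_div, one_div]
    _ ≤ _ := h
  have hgC : ∀ u, g u ≤ C := by
    intro u
    rw [hg u]
    apply Real.exp_le_exp.2
    calc (inner ℝ (f v) (f u) : ℝ) / τ ≤ 1 / τ := by gcongr; exact (abs_le.1 (hinner u)).2
    _ = τ⁻¹ := one_div τ
  have hgpos : ∀ u, 0 < g u := fun u => hc.trans_le (hgc u)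
  -- expectations
  set Epos : ℝ := ∑ u, pPos u * g u with hEposdef
  set Eneg : ℝ := ∑ u, pNeg u * g u with hEnegdef
  have hEpos : c ≤ Epos := by
    calc c = ∑ u, pPos u * c := by rw [← Finset.sum_mul, hpos1, one_mul]
    _ ≤ Epos := Finset.sum_le_sum fun u _ => mul_le_mul_of_nonneg_left (hgc u) (hpos0 u)
  have hEneg : c ≤ Eneg := by
    calc c = ∑ u, pNeg u * c := by rw [← Finset.sum_mul, hneg1, one_mul]
    _ ≤ Eneg := Finset.sum_le_sum fun u _ => mul_le_mul_of_nonneg_left (hgc u) (hneg0 u)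
  set D : ℝ := g v' + q * Eneg with hDdef
  have hD : 0 < D := add_pos (hgpos v') (mul_pos hq (hc.trans_le hEneg))
  -- laws of large numbers
  have hllnη : ∀ᵐ ω ∂μ, Tendsto (fun n : ℕ => (∑ k ∈ Finset.range n, g (η k ω)) / n)
      atTop (𝓝 Eneg) :=
    lln_comp μ η hmeasη
      (fun i j hij => hindep.indepFun (show (Sum.inr i : ℕ ⊕ ℕ) ≠ Sum.inr j by simpa using hij))
      pNeg hneg0 hηlaw g
  have hllnξ : ∀ᵐ ω ∂μ, Tendsto (fun n : ℕ => (∑ k ∈ Finset.range n, g (ξ k ω)) / n)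
      atTop (𝓝 Epos) :=
    lln_comp μ ξ hmeasξ
      (fun i j hij => hindep.indepFun (show (Sum.inl i : ℕ ⊕ ℕ) ≠ Sum.inl j by simpa using hij))
      pPos hpos0 hξlaw g
  -- sum bounds
  have hsum_lb : ∀ (X : ℕ → Ω → V) (n : ℕ) (ω : Ω),
      (n : ℝ) * c ≤ ∑ k ∈ Finset.range n, g (X k ω) := by
    intro X n ω
    calc (n : ℝ) * c = ∑ _k ∈ Finset.range n, c := by
          rw [Finset.sum_const, Finset.card_range, nsmul_eq_mul]
    _ ≤ _ := Finset.sum_le_sum fun k _ => hgc _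
  have hsum_ub : ∀ (X : ℕ → Ω → V) (n : ℕ) (ω : Ω),
      (∑ k ∈ Finset.range n, g (X k ω)) ≤ (n : ℝ) * C := by
    intro X n ω
    calc (∑ k ∈ Finset.range n, g (X k ω)) ≤ ∑ _k ∈ Finset.range n, C :=
          Finset.sum_le_sum fun k _ => hgC _
    _ = (n : ℝ) * C := by rw [Finset.sum_const, Finset.card_range, nsmul_eq_mul]
  have hsum_nonneg : ∀ (X : ℕ → Ω → V) (n : ℕ) (ω : Ω),
      0 ≤ ∑ k ∈ Finset.range n, g (X k ω) := fun X n ω =>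
    Finset.sum_nonneg fun k _ => (hgpos _).le
  -- numerator bounds (for m ≥ 1)
  have hN_lb : ∀ m : ℕ, 1 ≤ m → ∀ ω,
      l * c ≤ (l / (m : ℝ)) * ∑ j ∈ Finset.range m, g (ξ j ω) := by
    intro m hm ω
    have hm' : (0 : ℝ) < m := by exact_mod_cast hm
    have h1 : l * c = (l / (m : ℝ)) * ((m : ℝ) * c) := by field_simp
    rw [h1]
    exact mul_le_mul_of_nonneg_left (hsum_lb ξ m ω) (by positivity)
  have hN_ub : ∀ m : ℕ, ∀ ω,
      (l / (m : ℝ)) * ∑ j ∈ Finset.range m, g (ξ j ω) ≤ l * C := by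
    intro m ω
    rcases Nat.eq_zero_or_pos m with rfl | hm
    · simp; positivity
    have hm' : (0 : ℝ) < m := by exact_mod_cast hm
    have h1 : l * C = (l / (m : ℝ)) * ((m : ℝ) * C) := by field_simp
    rw [h1]
    exact mul_le_mul_of_nonneg_left (hsum_ub ξ m ω) (by positivity)
  have hN_nonneg : ∀ m : ℕ, ∀ ω,
      0 ≤ (l / (m : ℝ)) * ∑ j ∈ Finset.range m, g (ξ j ω) := by
    intro m ω
    have := hsum_nonneg ξ m ω
    positivity
  -- denominator bounds
  have hD_lb : ∀ n : ℕ, ∀ ω,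
      c ≤ g v' + (q / (n : ℝ)) * ∑ k ∈ Finset.range n, g (η k ω) := by
    intro n ω
    have h1 : 0 ≤ (q / (n : ℝ)) * ∑ k ∈ Finset.range n, g (η k ω) := by
      have := hsum_nonneg η n ω
      have hn : (0:ℝ) ≤ (n:ℝ) := Nat.cast_nonneg n
      positivity
    linarith [hgc v']
  have hD_ub : ∀ n : ℕ, ∀ ω,
      g v' + (q / (n : ℝ)) * ∑ k ∈ Finset.range n, g (η k ω) ≤ C + q * C := by
    intro n ω
    have hC' : g v' ≤ C := hgC v'
    rcases Nat.eq_zero_or_pos n with rfl | hn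
    · simp; nlinarith
    have hn' : (0 : ℝ) < n := by exact_mod_cast hn
    have h2 : (q / (n : ℝ)) * ∑ k ∈ Finset.range n, g (η k ω) ≤ (q / (n : ℝ)) * ((n:ℝ) * C) :=
      mul_le_mul_of_nonneg_left (hsum_ub η n ω) (by positivity)
    have h3 : (q / (n : ℝ)) * ((n:ℝ) * C) = q * C := by field_simp
    have h4 := h2.trans_eq h3
    linarith
  have hD_pos : ∀ n : ℕ, ∀ ω,
      0 < g v' + (q / (n : ℝ)) * ∑ k ∈ Finset.range n, g (η k ω) :=
    fun n ω => hc.trans_le (hD_lb n ω)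
  -- measurability helpers
  have hgm : Measurable g := measurable_of_countable g
  have hmeasN : ∀ m : ℕ, Measurable fun ω => (l / (m : ℝ)) * ∑ j ∈ Finset.range m, g (ξ j ω) :=
    fun m => measurable_const.mul
      (Finset.measurable_sum _ fun j _ => hgm.comp (hmeasξ j))
  have hmeasD : ∀ n : ℕ, Measurable fun ω =>
      g v' + (q / (n : ℝ)) * ∑ k ∈ Finset.range n, g (η k ω) :=
    fun n => measurable_const.add (measurable_const.mul
      (Finset.measurable_sum _ fun k _ => hgm.comp (hmeasη k)))
  -- the candidate limit sequence
  set lo : ℝ := l * c / (C + q * C) with hlodef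
  set hi : ℝ := l * C / c with hhidef
  have hlo : 0 < lo := by positivity
  set B : ℝ := |Real.log lo| + |Real.log hi| with hBdef
  have hB0 : 0 ≤ B := by positivity
  refine ⟨fun m => ∫ ω, -Real.log
      (((l / (m : ℝ)) * ∑ j ∈ Finset.range m, g (ξ j ω)) / D) ∂μ, fun m => ?_, ?_⟩
  · -- inner limit in n, m fixed
    rcases Nat.eq_zero_or_pos m with rfl | hm
    · simp only [Nat.cast_zero, Finset.range_zero, Finset.sum_empty, mul_zero, zero_div,
        Real.log_zero, neg_zero, integral_zero]
      exact tendsto_const_nhds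
    · apply tendsto_integral_of_dominated_convergence (bound := fun _ => B)
      · intro n
        exact ((Real.measurable_log.comp ((hmeasN m).div (hmeasD n))).neg).aestronglyMeasurable
      · exact integrable_const B
      · intro n
        apply ae_of_all
        intro ω
        rw [norm_neg, Real.norm_eq_abs]
        apply abs_log_le_aux hlo
        · exact div_le_div₀ (hN_nonneg m ω) (hN_lb m hm ω) (hD_pos n ω) (hD_ub n ω)
        · exact div_le_div₀ (by positivity) (hN_ub m ω) hc (hD_lb n ω)
      · filter_upwards [hllnη] with ω hω
        have hDlim : Tendsto (fun n : ℕ =>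
            g v' + (q / (n : ℝ)) * ∑ k ∈ Finset.range n, g (η k ω)) atTop (𝓝 D) := by
          have h1 : ∀ n : ℕ, g v' + (q / (n : ℝ)) * ∑ k ∈ Finset.range n, g (η k ω)
              = g v' + q * ((∑ k ∈ Finset.range n, g (η k ω)) / n) := by
            intro n; ring
          rw [hDdef]
          simp only [h1]
          exact tendsto_const_nhds.add (hω.const_mul q)
        have hNω : 0 < (l / (m : ℝ)) * ∑ j ∈ Finset.range m, g (ξ j ω) :=
          (by positivity : (0:ℝ) < l * c).trans_le (hN_lb m hm ω)
        have hratio : Tendsto (fun n : ℕ =>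
            ((l / (m : ℝ)) * ∑ j ∈ Finset.range m, g (ξ j ω)) /
              (g v' + (q / (n : ℝ)) * ∑ k ∈ Finset.range n, g (η k ω))) atTop
            (𝓝 (((l / (m : ℝ)) * ∑ j ∈ Finset.range m, g (ξ j ω)) / D)) :=
          tendsto_const_nhds.div hDlim hD.ne'
        have hne : ((l / (m : ℝ)) * ∑ j ∈ Finset.range m, g (ξ j ω)) / D ≠ 0 :=
          (div_pos hNω hD).ne'
        exact (((Real.continuousAt_log hne).tendsto.comp hratio)).neg
  · -- outer limit in m
    set B' : ℝ := |Real.log (l * c)| + |Real.log (l * C)| with hB'def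
    have hlc : (0:ℝ) < l * c := by positivity
    have hB'0 : 0 ≤ B' := by positivity
    have hboundN : ∀ m : ℕ, ∀ ω : Ω,
        |Real.log ((l / (m : ℝ)) * ∑ j ∈ Finset.range m, g (ξ j ω))| ≤ B' := by
      intro m ω
      rcases Nat.eq_zero_or_pos m with rfl | hm
      · simp [hB'0]
      · exact abs_log_le_aux hlc (hN_lb m hm ω) (hN_ub m ω)
    have hintN : ∀ m : ℕ, Integrable
        (fun ω => Real.log ((l / (m : ℝ)) * ∑ j ∈ Finset.range m, g (ξ j ω))) μ := by
      intro m
      apply Integrable.mono' (integrable_const B')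
        (Real.measurable_log.comp (hmeasN m)).aestronglyMeasurable
      exact ae_of_all _ fun ω => by rw [Real.norm_eq_abs]; exact hboundN m ω
    have key : Tendsto (fun m : ℕ =>
        ∫ ω, Real.log ((l / (m : ℝ)) * ∑ j ∈ Finset.range m, g (ξ j ω)) ∂μ) atTop
        (𝓝 (Real.log (l * Epos))) := by
      have h := tendsto_integral_of_dominated_convergence (μ := μ)
        (F := fun m ω => Real.log ((l / (m : ℝ)) * ∑ j ∈ Finset.range m, g (ξ j ω)))
        (f := fun _ => Real.log (l * Epos)) (bound := fun _ => B')
        (fun m => (Real.measurable_log.comp (hmeasN m)).aestronglyMeasurable)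
        (integrable_const B')
        (fun m => ae_of_all _ fun ω => by rw [Real.norm_eq_abs]; exact hboundN m ω)
        ?_
      · simpa using h
      · filter_upwards [hllnξ] with ω hω
        have h1 : ∀ m : ℕ, (l / (m : ℝ)) * ∑ j ∈ Finset.range m, g (ξ j ω)
            = l * ((∑ j ∈ Finset.range m, g (ξ j ω)) / m) := by intro m; ring
        have hNlim : Tendsto (fun m : ℕ =>
            (l / (m : ℝ)) * ∑ j ∈ Finset.range m, g (ξ j ω)) atTop (𝓝 (l * Epos)) := by
          simp only [h1]
          exact hω.const_mul l
        have hne : l * Epos ≠ 0 := (mul_pos hl (hc.trans_le hEpos)).ne'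
        exact (Real.continuousAt_log hne).tendsto.comp hNlim
    have hAeq : ∀ m : ℕ, 1 ≤ m →
        (∫ ω, -Real.log (((l / (m : ℝ)) * ∑ j ∈ Finset.range m, g (ξ j ω)) / D) ∂μ)
          = Real.log D - ∫ ω, Real.log ((l / (m : ℝ)) * ∑ j ∈ Finset.range m, g (ξ j ω)) ∂μ := by
      intro m hm
      have h1 : ∀ ω : Ω, -Real.log (((l / (m : ℝ)) * ∑ j ∈ Finset.range m, g (ξ j ω)) / D)
          = Real.log D - Real.log ((l / (m : ℝ)) * ∑ j ∈ Finset.range m, g (ξ j ω)) := by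
        intro ω
        have hNω : 0 < (l / (m : ℝ)) * ∑ j ∈ Finset.range m, g (ξ j ω) :=
          hlc.trans_le (hN_lb m hm ω)
        rw [Real.log_div hNω.ne' hD.ne']
        ring
      simp only [h1]
      rw [integral_sub (integrable_const _) (hintN m), integral_const]
      simp
    have hfinal : Tendsto (fun m : ℕ => Real.log D -
        ∫ ω, Real.log ((l / (m : ℝ)) * ∑ j ∈ Finset.range m, g (ξ j ω)) ∂μ) atTop
        (𝓝 (Real.log D - Real.log (l * Epos))) := tendsto_const_nhds.sub key
    have heq : Real.log D - Real.log (l * Epos) = -Real.log ((l * Epos) / D) := by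
      rw [Real.log_div (mul_pos hl (hc.trans_le hEpos)).ne' hD.ne']
      ring
    rw [heq] at hfinal
    apply hfinal.congr'
    filter_upwards [eventually_ge_atTop 1] with m hm
    exact (hAeq m hm).symm
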